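/- arXiv:2605.30191 — 4 statements merged into one kernel-verified Lean document; each statement's English description precedes it below -/
import Mathlib

section
/- Let E = ℝ^ℝ with the product topology and let γ : [0,1] → E be defined by γ(t)(x) = 1 if x = t, and 0 otherwise. If K ⊆ [0,1] is compact and γ|_K is continuous, then K is finite. Consequently γ is not Lusin-measurable: there is no compact K with λ([0,1]\K) < 1 on which γ is continuous. -/
open MeasureTheory Set Filter Topology

theorem stmt7 (γ : ℝ → (ℝ → ℝ))
    (hdef : ∀ t x, γ t x = if x = t then (1:ℝ) else 0) :
    (∀ K : Set ℝ, K ⊆ Icc 0 1 → IsCompact K → ContinuousOn γ K → K.Finite) ∧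
    ¬ ∃ K : Set ℝ, K ⊆ Icc 0 1 ∧ IsCompact K ∧
        volume (Icc (0:ℝ) 1 \ K) < 1 ∧ ContinuousOn γ K := by
  have main : ∀ K : Set ℝ, K ⊆ Icc 0 1 → IsCompact K → ContinuousOn γ K → K.Finite := by
    intro K _ hcomp hcont
    have hdisc : DiscreteTopology K := by
      rw [discreteTopology_subtype_iff]
      intro x hx
      -- coordinate function at x is continuous on K
      have hc : ContinuousWithinAt (fun t => γ t x) K x :=
        ((continuous_apply x).continuousAt.comp_continuousWithinAt (hcont x hx))
      have hval : γ x x = 1 := by simp [hdef]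
      have hnbhd : {t : ℝ | γ t x ∈ Ioi (1/2 : ℝ)} ∈ 𝓝[K] x := by
        apply hc
        simp only [hval]
        exact Ioi_mem_nhds (by norm_num)
      have hsub : {t : ℝ | γ t x ∈ Ioi (1/2 : ℝ)} ⊆ {x} := by
        intro t ht
        simp only [mem_setOf_eq, hdef, mem_Ioi] at ht
        by_contra h
        rw [if_neg (fun hxt => h (by simp [hxt]))] at ht
        norm_num at ht
      have hx_mem : {x} ∈ 𝓝[K] x := Filter.mem_of_superset hnbhd hsub
      have heq : 𝓝[≠] x ⊓ 𝓟 K = 𝓝[K] x ⊓ 𝓟 {x}ᶜ := by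
        rw [← nhdsWithin_inter', ← nhdsWithin_inter', inter_comm]
      rw [heq, ← Filter.empty_mem_iff_bot]
      have h1 : {x} ∈ 𝓝[K] x ⊓ 𝓟 {x}ᶜ := Filter.mem_inf_of_left hx_mem
      have h2 : ({x}ᶜ : Set ℝ) ∈ 𝓝[K] x ⊓ 𝓟 {x}ᶜ :=
        Filter.mem_inf_of_right (Filter.mem_principal_self _)
      have := Filter.inter_mem h1 h2
      simpa using this
    exact hcomp.finite (isDiscrete_iff_discreteTopology.mpr hdisc)
  refine ⟨main, ?_⟩
  rintro ⟨K, hK, hcomp, hvol, hcont⟩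
  have hfin := main K hK hcomp hcont
  have h0 : volume K = 0 := hfin.measure_zero _
  rw [measure_diff_null h0, Real.volume_Icc] at hvol
  norm_num at hvol
end

section
/- Let E be a sequentially complete Hausdorff real locally convex space and (γₙ)ₙ a sequence of Lusin-measurable functions [0,1] → E. Suppose for every ε > 0 there is a compact H_ε ⊆ [0,1] with λ([0,1] \ H_ε) < ε such that each γₙ|_{H_ε} is continuous and for each continuous seminorm q there exists N with sup_{t ∈ H_ε} q(γₘ(t) − γₙ(t)) < ε for all m, n ≥ N. Then the pointwise limit γ(t) = lim_n γₙ(t) exists for almost every t ∈ [0,1], and the function γ (extended by 0 on the null set) is Lusin-measurable. -/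
open MeasureTheory Set Filter Topology

def LusinMeasurable {E : Type*} [TopologicalSpace E] (γ : ℝ → E) : Prop :=
  ∀ ε : ℝ, 0 < ε → ∃ K : Set ℝ, K ⊆ Icc 0 1 ∧ IsCompact K ∧
    volume (Icc (0:ℝ) 1 \ K) ≤ ENNReal.ofReal ε ∧ ContinuousOn γ K

theorem stmt9 {E : Type*} [AddCommGroup E] [Module ℝ E] [UniformSpace E]
    [IsUniformAddGroup E] [ContinuousSMul ℝ E] [LocallyConvexSpace ℝ E] [T2Space E]
    (hcomplete : ∀ u : ℕ → E, CauchySeq u → ∃ x, Tendsto u atTop (𝓝 x))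
    (γ : ℕ → ℝ → E) (hγ : ∀ n, LusinMeasurable (γ n))
    (hcauchy : ∀ ε : ℝ, 0 < ε → ∃ H : Set ℝ, H ⊆ Icc 0 1 ∧ IsCompact H ∧
      volume (Icc (0:ℝ) 1 \ H) < ENNReal.ofReal ε ∧
      (∀ n, ContinuousOn (γ n) H) ∧
      ∀ q : Seminorm ℝ E, Continuous q → ∃ N : ℕ, ∀ m ≥ N, ∀ n ≥ N,
        ∀ t ∈ H, q (γ m t - γ n t) < ε) :
    ∃ γlim : ℝ → E,
      (∀ᵐ t ∂(volume.restrict (Icc (0:ℝ) 1)),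
        Tendsto (fun n => γ n t) atTop (𝓝 (γlim t))) ∧
      LusinMeasurable γlim := by
  classical
  set p := gaugeSeminormFamily ℝ E with hpdef
  have hp : WithSeminorms p := with_gaugeSeminormFamily
  have hb : (uniformity E).HasBasis (fun s : Set E => s ∈ SeminormFamily.basisSets p)
      (fun s => {x : E × E | x.2 - x.1 ∈ s}) := by
    rw [uniformity_eq_comap_nhds_zero E]
    exact hp.hasBasis.comap _
  have hhalf : ∀ k : ℕ, (0:ℝ) < (1/2)^k := fun k => by positivity
  choose H hHsub hHcomp hHmeas hHcont hHq using fun k : ℕ => hcauchy ((1/2)^k) (hhalf k)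
  set A : ℕ → Set ℝ := fun k => ⋂ j, H (k + j) with hA
  have hAsubH : ∀ k j, k ≤ j → A k ⊆ H j := by
    intro k j hkj
    have h : H (k + (j - k)) = H j := by rw [Nat.add_sub_cancel' hkj]
    exact h ▸ Set.iInter_subset _ (j - k)
  have hAsub : ∀ k, A k ⊆ Icc 0 1 := fun k => (hAsubH k k le_rfl).trans (hHsub k)
  have hAcomp : ∀ k, IsCompact (A k) :=
    fun k => (hHcomp k).of_isClosed_subset (isClosed_iInter fun j => (hHcomp _).isClosed)
      (hAsubH k k le_rfl)
  have hAmeas : ∀ k, volume (Icc (0:ℝ) 1 \ A k) ≤ ENNReal.ofReal (2 * (1/2)^k) := by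
    intro k
    have hsub : Icc (0:ℝ) 1 \ A k ⊆ ⋃ j, (Icc (0:ℝ) 1 \ H (k + j)) := by
      intro t ht
      simp only [hA, mem_diff, mem_iInter, not_forall] at ht
      obtain ⟨j, hj⟩ := ht.2
      exact mem_iUnion.2 ⟨j, ht.1, hj⟩
    have h2 : ∑' j : ℕ, ENNReal.ofReal ((1/2:ℝ)^(k+j)) = ENNReal.ofReal (2 * (1/2)^k) := by
      have heq : ∀ j : ℕ, ENNReal.ofReal ((1/2:ℝ)^(k+j))
          = ENNReal.ofReal ((1/2:ℝ)^k) * (ENNReal.ofReal (1/2))^j := by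
        intro j
        rw [pow_add, ENNReal.ofReal_mul (by positivity)]
        congr 1
        exact ENNReal.ofReal_pow (by norm_num) j
      rw [tsum_congr heq, ENNReal.tsum_mul_left, ENNReal.tsum_geometric]
      have h12 : ENNReal.ofReal (1/2 : ℝ) = 2⁻¹ := by
        rw [one_div, ENNReal.ofReal_inv_of_pos (by norm_num), ENNReal.ofReal_ofNat]
      rw [h12, ENNReal.one_sub_inv_two, inv_inv, ENNReal.ofReal_mul (by norm_num),
        ENNReal.ofReal_ofNat, mul_comm]
    calc volume (Icc (0:ℝ) 1 \ A k) ≤ ∑' j, volume (Icc (0:ℝ) 1 \ H (k+j)) :=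
        (measure_mono hsub).trans (measure_iUnion_le _)
      _ ≤ ∑' j : ℕ, ENNReal.ofReal ((1/2:ℝ)^(k+j)) :=
        ENNReal.tsum_le_tsum fun j => (hHmeas _).le
      _ = ENNReal.ofReal (2 * (1/2)^k) := h2
  have hjex : ∀ (k : ℕ) (r : ℝ), 0 < r → ∃ j, k ≤ j ∧ (1/2:ℝ)^j < r := by
    intro k r hr
    obtain ⟨j0, hj0⟩ := exists_pow_lt_of_lt_one hr (by norm_num : (1/2:ℝ) < 1)
    refine ⟨max k j0, le_max_left _ _, lt_of_le_of_lt ?_ hj0⟩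
    exact pow_le_pow_of_le_one (by norm_num) (by norm_num) (le_max_right _ _)
  have key : ∀ k, ∀ t ∈ A k, CauchySeq (fun n => γ n t) := by
    intro k t ht
    rw [hb.cauchySeq_iff]
    intro U hU
    rw [SeminormFamily.basisSets_iff] at hU
    obtain ⟨s, r, hr, rfl⟩ := hU
    obtain ⟨j, hjk, hjr⟩ := hjex k r hr
    choose N hN using fun i => hHq j (p i) (hp.continuous_seminorm i)
    refine ⟨s.sup N, fun m hm n hn => ?_⟩
    simp only [mem_setOf_eq, Seminorm.mem_ball_zero]
    apply Seminorm.finset_sup_apply_lt hr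
    intro i hi
    exact lt_trans (hN i n (le_trans (Finset.le_sup hi) hn) m
      (le_trans (Finset.le_sup hi) hm) t (hAsubH k j hjk ht)) hjr
  set S : Set ℝ := ⋃ k, A k with hS
  have hconv : ∀ t ∈ S, ∃ x, Tendsto (fun n => γ n t) atTop (𝓝 x) := by
    intro t ht
    obtain ⟨k, hk⟩ := mem_iUnion.mp ht
    exact hcomplete _ (key k t hk)
  set γlim : ℝ → E := fun t =>
    if h : ∃ x, Tendsto (fun n => γ n t) atTop (𝓝 x) then h.choose else 0 with hγdef
  have hγlim : ∀ t ∈ S, Tendsto (fun n => γ n t) atTop (𝓝 (γlim t)) := by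
    intro t ht
    have h := hconv t ht
    simp only [hγdef, dif_pos h]
    exact h.choose_spec
  have htend0 : Tendsto (fun k : ℕ => ENNReal.ofReal (2*(1/2:ℝ)^k)) atTop (𝓝 0) := by
    have h1 : Tendsto (fun k : ℕ => 2*(1/2:ℝ)^k) atTop (𝓝 0) := by
      have := tendsto_pow_atTop_nhds_zero_of_lt_one (by norm_num : (0:ℝ) ≤ 1/2)
        (by norm_num : (1/2:ℝ) < 1)
      simpa using this.const_mul 2
    have := (ENNReal.continuous_ofReal.tendsto 0).comp h1
    rw [ENNReal.ofReal_zero] at this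
    exact this
  have hSnull : volume (Icc (0:ℝ) 1 \ S) = 0 := by
    have hle : ∀ k, volume (Icc (0:ℝ) 1 \ S) ≤ ENNReal.ofReal (2*(1/2)^k) :=
      fun k => le_trans (measure_mono (diff_subset_diff_right (subset_iUnion A k))) (hAmeas k)
    exact le_antisymm (ge_of_tendsto htend0 (Eventually.of_forall hle)) zero_le
  refine ⟨γlim, ?_, ?_⟩
  · rw [ae_iff]
    have hr : (volume.restrict (Icc (0:ℝ) 1)) Sᶜ = 0 := by
      rw [Measure.restrict_apply' measurableSet_Icc]
      rw [show Sᶜ ∩ Icc (0:ℝ) 1 = Icc (0:ℝ) 1 \ S from by rw [Set.inter_comm]; rfl]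
      exact hSnull
    exact measure_mono_null (fun t ht hts => ht (hγlim t hts)) hr
  · intro ε hε
    obtain ⟨k, hk⟩ : ∃ k:ℕ, 2*(1/2:ℝ)^k ≤ ε := by
      obtain ⟨k, hk⟩ := exists_pow_lt_of_lt_one (half_pos hε) (by norm_num : (1/2:ℝ) < 1)
      exact ⟨k, by linarith⟩
    refine ⟨A k, hAsub k, hAcomp k, (hAmeas k).trans (ENNReal.ofReal_le_ofReal hk), ?_⟩
    have hunif : TendstoUniformlyOn (fun n t => γ n t) γlim atTop (A k) := by
      intro U hU
      rw [hb.mem_iff] at hU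
      obtain ⟨V, hV, hVU⟩ := hU
      rw [SeminormFamily.basisSets_iff] at hV
      obtain ⟨s, r, hr, rfl⟩ := hV
      obtain ⟨j, hjk, hjr⟩ := hjex k r hr
      choose N hN using fun i => hHq j (p i) (hp.continuous_seminorm i)
      rw [eventually_atTop]
      refine ⟨s.sup N, fun n hn t ht => ?_⟩
      apply hVU
      simp only [mem_setOf_eq, Seminorm.mem_ball_zero]
      apply Seminorm.finset_sup_apply_lt hr
      intro i hi
      have htH : t ∈ H j := hAsubH k j hjk ht
      have h1 : Tendsto (fun m => γ m t) atTop (𝓝 (γlim t)) :=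
        hγlim t (mem_iUnion.2 ⟨k, ht⟩)
      have hlim : Tendsto (fun m => (p i) (γ n t - γ m t)) atTop
          (𝓝 ((p i) (γ n t - γlim t))) :=
        ((hp.continuous_seminorm i).tendsto _).comp (tendsto_const_nhds.sub h1)
      have hle : (p i) (γ n t - γlim t) ≤ (1/2)^j :=
        le_of_tendsto hlim (eventually_atTop.2 ⟨N i, fun m hm =>
          (hN i n (le_trans (Finset.le_sup hi) hn) m hm t htH).le⟩)
      exact lt_of_le_of_lt hle hjr
    exact hunif.continuousOn (Eventually.of_forall fun n =>
      (hHcont k n).mono (hAsubH k k le_rfl)).frequently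
end

section
/- Let E = ℝ^ℝ with the product topology and γₙ : [0,1] → E, γₙ(t)(x) = max{1 − n|x − t|, 0}. Then for every x₀ ∈ ℝ and 1 ≤ p < ∞, ∫₀¹ |γₙ(t)(x₀)|^p dt ≤ 2/n; hence γₙ → 0 in L^p([0,1], E), even though the pointwise limit γ(t) = δ_t (the indicator of {t}) differs from 0 at every t ∈ [0,1]. -/
open MeasureTheory Set Filter Topology

theorem stmt15 (γ : ℕ → ℝ → (ℝ → ℝ))
    (hdef : ∀ n t x, γ n t x = max (1 - (n : ℝ) * |x - t|) 0)
    (p : ℝ) (hp : 1 ≤ p) :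
    (∀ x₀ : ℝ, ∀ n : ℕ, 0 < n →
      ∫⁻ t in Icc (0:ℝ) 1, ENNReal.ofReal (|γ n t x₀| ^ p) ≤
        ENNReal.ofReal (2 / n)) ∧
    (∀ x₀ : ℝ, Tendsto
      (fun n : ℕ => ∫⁻ t in Icc (0:ℝ) 1, ENNReal.ofReal (|γ n t x₀| ^ p))
      atTop (𝓝 0)) ∧
    (∀ t ∈ Icc (0:ℝ) 1,
      Tendsto (fun n => γ n t) atTop (𝓝 (fun x => if x = t then (1:ℝ) else 0)) ∧
      (fun x => if x = t then (1:ℝ) else 0) ≠ (0 : ℝ → ℝ)) := by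
  have key : ∀ x₀ : ℝ, ∀ n : ℕ, 0 < n →
      ∫⁻ t in Icc (0:ℝ) 1, ENNReal.ofReal (|γ n t x₀| ^ p) ≤
        ENNReal.ofReal (2 / n) := by
    intro x₀ n hn
    have hnpos : (0:ℝ) < n := by exact_mod_cast hn
    have hbound : ∀ t, ENNReal.ofReal (|γ n t x₀| ^ p) ≤
        (Icc (x₀ - 1/n) (x₀ + 1/n)).indicator (fun _ => (1 : ENNReal)) t := by
      intro t
      by_cases ht : t ∈ Icc (x₀ - 1/n) (x₀ + 1/n)
      · rw [indicator_of_mem ht]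
        have h0 : |γ n t x₀| ≤ 1 := by
          rw [hdef, abs_of_nonneg (le_max_right _ _)]
          refine max_le ?_ zero_le_one
          nlinarith [abs_nonneg (x₀ - t), hnpos.le]
        calc ENNReal.ofReal (|γ n t x₀| ^ p) ≤ ENNReal.ofReal 1 :=
              ENNReal.ofReal_le_ofReal
                (Real.rpow_le_one (abs_nonneg _) h0 (by linarith))
          _ = 1 := ENNReal.ofReal_one
      · have hdist : 1 / (n:ℝ) < |x₀ - t| := by
          rw [mem_Icc, not_and_or] at ht
          rcases ht with h | h
          · push_neg at h
            rw [lt_abs]; left; linarith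
          · push_neg at h
            rw [lt_abs]; right; linarith
        have hzero : γ n t x₀ = 0 := by
          rw [hdef]
          refine max_eq_right ?_
          have : 1 < (n:ℝ) * |x₀ - t| := by
            calc (1:ℝ) = n * (1/n) := by field_simp
              _ < n * |x₀ - t| := by
                exact mul_lt_mul_of_pos_left hdist hnpos
          linarith
        rw [hzero, abs_zero, Real.zero_rpow (by linarith : p ≠ 0)]
        simp
    calc ∫⁻ t in Icc (0:ℝ) 1, ENNReal.ofReal (|γ n t x₀| ^ p)
        ≤ ∫⁻ t in Icc (0:ℝ) 1,
            (Icc (x₀ - 1/n) (x₀ + 1/n)).indicator (fun _ => (1 : ENNReal)) t :=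
          lintegral_mono hbound
      _ ≤ ∫⁻ t, (Icc (x₀ - 1/n) (x₀ + 1/n)).indicator (fun _ => (1 : ENNReal)) t :=
          setLIntegral_le_lintegral _ _
      _ = volume (Icc (x₀ - 1/n) (x₀ + 1/n)) := by
          rw [lintegral_indicator measurableSet_Icc]; simp
      _ = ENNReal.ofReal (2 / n) := by
          rw [Real.volume_Icc]; congr 1; ring
  refine ⟨key, ?_, ?_⟩
  · intro x₀
    have h1 : Tendsto (fun n : ℕ => ENNReal.ofReal (2 / n)) atTop (𝓝 0) := by
      have h2 : Tendsto (fun n : ℕ => (2:ℝ) / n) atTop (𝓝 0) :=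
        tendsto_const_div_atTop_nhds_zero_nat 2
      simpa using ENNReal.tendsto_ofReal h2
    refine tendsto_of_tendsto_of_tendsto_of_le_of_le' tendsto_const_nhds h1 ?_ ?_
    · filter_upwards with n using zero_le
    · filter_upwards [eventually_gt_atTop 0] with n hn using key x₀ n hn
  · intro t ht
    constructor
    · rw [tendsto_pi_nhds]
      intro x
      by_cases hx : x = t
      · subst hx
        have heq : ∀ n, γ n x x = 1 := fun n => by rw [hdef]; simp
        simpa [heq] using (tendsto_const_nhds : Tendsto (fun _ : ℕ => (1:ℝ)) atTop (𝓝 1))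
      · simp only [hx, if_false]
        have hd : 0 < |x - t| := abs_pos.mpr (sub_ne_zero.mpr hx)
        have hev : ∀ᶠ n in atTop, γ n t x = 0 := by
          filter_upwards [eventually_ge_atTop ⌈1/|x - t|⌉₊] with n hn
          have h1 : 1 / |x - t| ≤ (n:ℝ) :=
            (Nat.le_ceil _).trans (by exact_mod_cast hn)
          have h2 : (1:ℝ) ≤ n * |x - t| := by
            rw [div_le_iff₀ hd] at h1; linarith
          rw [hdef]
          exact max_eq_right (by linarith)
        exact tendsto_const_nhds.congr' (hev.mono fun n h => h.symm)
    · intro h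
      have := congrFun h t
      simp at this
end

section
/- Let E be a sequentially complete Hausdorff real locally convex space, 1 ≤ p < ∞, and γ ∈ L^p([0,1], E). For n ∈ ℕ let I_{n,j} = [(j−1)/2ⁿ, j/2ⁿ) for j = 1, ..., 2ⁿ, and define the simple function γₙ(t) = ∑_{j=1}^{2ⁿ} (2ⁿ ∫_{I_{n,j}} γ(s) ds) · χ_{I_{n,j}}(t), using the weak integral. Then γₙ → γ in L^p([0,1], E), i.e. ‖γ − γₙ‖_{p,q} → 0 for every continuous seminorm q. -/
open MeasureTheory Set Filter Topology

open ENNReal Uniformity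


theorem hb_seminorm {E : Type*} [AddCommGroup E] [Module ℝ E] [UniformSpace E]
    [IsUniformAddGroup E] [ContinuousSMul ℝ E]
    (q : Seminorm ℝ E) (hq : Continuous q) (x : E) :
    ∃ f : E →L[ℝ] ℝ, f x = q x ∧ ∀ y, |f y| ≤ q y := by
  have hext : ∃ g : E →ₗ[ℝ] ℝ, g x = q x ∧ ∀ y, g y ≤ q y := by
    by_cases hx0 : x = 0
    · exact ⟨0, by simp [hx0], fun y => by simpa using apply_nonneg q y⟩
    · obtain ⟨g, hg1, hg2⟩ := exists_extension_of_le_sublinear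
        (LinearPMap.mkSpanSingleton x (q x) hx0) q
        (fun c hc y => by rw [map_smul_eq_mul, Real.norm_eq_abs, abs_of_pos hc])
        (fun a b => map_add_le_add q a b)
        (fun v => by
          obtain ⟨c, hc⟩ := Submodule.mem_span_singleton.1 v.2
          have hv : v = ⟨c • x, hc ▸ v.2⟩ := Subtype.ext hc.symm
          rw [hv, LinearPMap.mkSpanSingleton'_apply, smul_eq_mul]
          have h2 : q (c • x) = |c| * q x := by
            rw [map_smul_eq_mul]; rfl
          rw [h2]
          exact mul_le_mul_of_nonneg_right (le_abs_self c) (apply_nonneg q x))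
      refine ⟨g, ?_, hg2⟩
      have h3 := hg1 ⟨x, Submodule.mem_span_singleton_self x⟩
      rw [h3, LinearPMap.mkSpanSingleton_apply]
  obtain ⟨g, hgx, hgle⟩ := hext
  have habs : ∀ y, |g y| ≤ q y := by
    intro y
    rw [abs_le]
    refine ⟨?_, hgle y⟩
    have h4 := hgle (-y)
    rw [map_neg, map_neg_eq_map] at h4
    linarith
  have hcont : Continuous g := by
    refine continuous_of_continuousAt_zero g.toAddMonoidHom ?_
    have h0 : Tendsto (fun y => q y) (𝓝 0) (𝓝 0) := by
      have := hq.tendsto 0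
      rwa [map_zero] at this
    have h5 : Tendsto g (𝓝 0) (𝓝 0) := squeeze_zero_norm (fun y => habs y) h0
    simpa [ContinuousAt, map_zero] using h5
  exact ⟨⟨g, hcont⟩, hgx, habs⟩

-- uniform continuity on a compact set, seminorm version
theorem unif_cont {E : Type*} [AddCommGroup E] [Module ℝ E] [UniformSpace E]
    [IsUniformAddGroup E] [ContinuousSMul ℝ E]
    (q : Seminorm ℝ E) (hq : Continuous q) (γ : ℝ → E) {K : Set ℝ}
    (hK : IsCompact K) (hcont : ContinuousOn γ K) {ε : ℝ} (hε : 0 < ε) :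
    ∃ δ > 0, ∀ t ∈ K, ∀ s ∈ K, |t - s| < δ → q (γ t - γ s) < ε := by
  haveI : CompactSpace K := isCompact_iff_compactSpace.mp hK
  have hγK : Continuous (fun u : K => γ u) := continuousOn_iff_continuous_restrict.mp hcont
  have hUC : UniformContinuous (fun u : K => γ u) :=
    CompactSpace.uniformContinuous_of_continuous hγK
  have hU : {p : E × E | q (p.2 - p.1) < ε} ∈ 𝓤 E := by
    rw [uniformity_eq_comap_nhds_zero E]
    have hmem : {v : E | q v < ε} ∈ 𝓝 (0 : E) :=
      (isOpen_lt hq continuous_const).mem_nhds (by simpa using hε)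
    exact Filter.mem_comap.2 ⟨_, hmem, fun x hx => hx⟩
  have hpre := hUC hU
  rw [Filter.mem_map, Metric.mem_uniformity_dist] at hpre
  obtain ⟨δ, hδ, hd⟩ := hpre
  refine ⟨δ, hδ, fun t ht s hs hts => ?_⟩
  have := @hd ⟨s, hs⟩ ⟨t, ht⟩ (by
    rw [Subtype.dist_eq, Real.dist_eq, abs_sub_comm]
    exact hts)
  exact this

-- ENNReal Jensen for probability measures
theorem jensen_prob {α : Type*} [MeasurableSpace α] (μ : Measure α) (hμ : μ univ = 1)
    {f : α → ℝ≥0∞} (hf : AEMeasurable f μ) {p : ℝ} (hp : 1 ≤ p) :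
    (∫⁻ a, f a ∂μ) ^ p ≤ ∫⁻ a, f a ^ p ∂μ := by
  rcases eq_or_lt_of_le hp with h1 | h1
  · simp [← h1]
  · have hpq : p.HolderConjugate (p / (p - 1)) := Real.HolderConjugate.conjExponent h1
    have hH := ENNReal.lintegral_mul_le_Lp_mul_Lq μ hpq hf (aemeasurable_const (b := (1:ℝ≥0∞)))
    simp only [Pi.mul_apply, mul_one, ENNReal.one_rpow, lintegral_const, hμ, mul_one,
      ENNReal.one_rpow] at hH
    have hp0 : p ≠ 0 := by positivity
    calc (∫⁻ a, f a ∂μ) ^ p ≤ ((∫⁻ a, f a ^ p ∂μ) ^ (1/p)) ^ p :=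
          ENNReal.rpow_le_rpow hH (by positivity)
      _ = ∫⁻ a, f a ^ p ∂μ := by
          rw [← ENNReal.rpow_mul, one_div, inv_mul_cancel₀ hp0, ENNReal.rpow_one]

-- lintegral over finite biUnion is at most the sum
theorem lint_biUnion_le {α : Type*} [MeasurableSpace α] (μ : Measure α)
    (s : Finset ℕ) (t : ℕ → Set α) (f : α → ℝ≥0∞) :
    ∫⁻ x in ⋃ j ∈ s, t j, f x ∂μ ≤ ∑ j ∈ s, ∫⁻ x in t j, f x ∂μ := by
  classical
  induction s using Finset.induction with
  | empty => simp
  | insert a s' hj ih =>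
    rw [Finset.set_biUnion_insert, Finset.sum_insert hj]
    exact le_trans (lintegral_union_le _ _ _) (add_le_add le_rfl ih)

-- (a+b+c)^p ≤ 3^p (a^p + b^p + c^p)
theorem add3_rpow_le {a b c : ℝ≥0∞} {p : ℝ} (hp : 0 ≤ p) :
    (a + b + c) ^ p ≤ 3 ^ p * (a ^ p + b ^ p + c ^ p) := by
  have h1 : a + b + c ≤ 3 * max a (max b c) := by
    have ha : a ≤ max a (max b c) := le_max_left _ _
    have hb : b ≤ max a (max b c) := le_trans (le_max_left _ _) (le_max_right _ _)
    have hc : c ≤ max a (max b c) := le_trans (le_max_right _ _) (le_max_right _ _)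
    calc a + b + c ≤ max a (max b c) + max a (max b c) + max a (max b c) := by
          gcongr
      _ = 3 * max a (max b c) := by ring
  calc (a + b + c) ^ p ≤ (3 * max a (max b c)) ^ p := ENNReal.rpow_le_rpow h1 hp
    _ = 3 ^ p * (max a (max b c)) ^ p := ENNReal.mul_rpow_of_nonneg _ _ hp
    _ ≤ 3 ^ p * (a ^ p + b ^ p + c ^ p) := by
        gcongr
        rcases max_cases a (max b c) with ⟨h2, _⟩ | ⟨h2, _⟩
        · rw [h2]; exact le_add_of_le_of_nonneg (le_add_of_le_of_nonneg le_rfl zero_le) zero_le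
        · rw [h2]
          rcases max_cases b c with ⟨h, _⟩ | ⟨h, _⟩ <;> rw [h]
          · exact le_add_of_le_of_nonneg (le_add_of_nonneg_of_le zero_le le_rfl) zero_le
          · exact le_add_of_nonneg_of_le zero_le le_rfl

-- (a+b)^p ≤ 2^p (a^p + b^p)
theorem add2_rpow_le {a b : ℝ≥0∞} {p : ℝ} (hp : 0 ≤ p) :
    (a + b) ^ p ≤ 2 ^ p * (a ^ p + b ^ p) := by
  have h1 : a + b ≤ 2 * max a b := by
    calc a + b ≤ max a b + max a b := by gcongr; exacts [le_max_left _ _, le_max_right _ _]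
      _ = 2 * max a b := by ring
  calc (a + b) ^ p ≤ (2 * max a b) ^ p := ENNReal.rpow_le_rpow h1 hp
    _ = 2 ^ p * (max a b) ^ p := ENNReal.mul_rpow_of_nonneg _ _ hp
    _ ≤ 2 ^ p * (a ^ p + b ^ p) := by
        gcongr
        rcases max_cases a b with ⟨h, _⟩ | ⟨h, _⟩ <;> rw [h]
        exacts [le_add_of_le_of_nonneg le_rfl zero_le, le_add_of_nonneg_of_le zero_le le_rfl]
theorem lusin_aemeasurable {E : Type*} [TopologicalSpace E] {γ : ℝ → E}
    (hγ : LusinMeasurable γ) (φ : E → ℝ) (hφ : Continuous φ) :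
    AEMeasurable (fun t => φ (γ t)) (volume.restrict (Icc (0:ℝ) 1)) := by
  have hK : ∀ m : ℕ, ∃ K : Set ℝ, K ⊆ Icc 0 1 ∧ IsCompact K ∧
      volume (Icc (0:ℝ) 1 \ K) ≤ ENNReal.ofReal (1 / (m + 1)) ∧ ContinuousOn γ K :=
    fun m => hγ (1 / (m + 1)) (by positivity)
  choose K hKsub hKcomp hKvol hKcont using hK
  set T : Set ℝ := ⋃ m, K m with hT
  have hTnull : volume (Icc (0:ℝ) 1 \ T) = 0 := by
    have hle : ∀ m : ℕ, volume (Icc (0:ℝ) 1 \ T) ≤ ENNReal.ofReal (1 / (m + 1)) := by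
      intro m
      exact le_trans (measure_mono (diff_subset_diff_right (subset_iUnion K m))) (hKvol m)
    have htend : Tendsto (fun m : ℕ => ENNReal.ofReal (1 / (m + 1))) atTop (𝓝 0) := by
      rw [← ENNReal.ofReal_zero]
      exact ENNReal.tendsto_ofReal tendsto_one_div_add_atTop_nhds_zero_nat
    simpa using ge_of_tendsto' htend hle
  have hmeasT : AEMeasurable (fun t => φ (γ t)) (volume.restrict T) := by
    rw [hT, aemeasurable_iUnion_iff]
    intro m
    exact (hφ.comp_continuousOn (hKcont m)).aemeasurable (hKcomp m).measurableSet
  refine hmeasT.mono_ac (Measure.AbsolutelyContinuous.mk ?_)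
  intro s hs h0
  rw [Measure.restrict_apply hs] at h0 ⊢
  have hsub : s ∩ Icc (0:ℝ) 1 ⊆ (s ∩ T) ∪ (Icc (0:ℝ) 1 \ T) := by
    intro x ⟨hxs, hxI⟩
    by_cases hxT : x ∈ T
    · exact Or.inl ⟨hxs, hxT⟩
    · exact Or.inr ⟨hxI, hxT⟩
  exact le_antisymm (le_trans (measure_mono hsub)
    (le_trans (measure_union_le _ _) (by rw [h0, hTnull, add_zero]))) zero_le


theorem jensen_avg {S : Set ℝ} (hS : MeasurableSet S) {f : ℝ → ℝ≥0∞}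
    (hf : AEMeasurable f (volume.restrict S)) {c : ℝ≥0∞} (hc : c * volume S = 1)
    {p : ℝ} (hp : 1 ≤ p) :
    (c * ∫⁻ x in S, f x) ^ p ≤ c * ∫⁻ x in S, f x ^ p := by
  have hprob : (c • volume.restrict S) univ = 1 := by
    rw [Measure.smul_apply, Measure.restrict_apply_univ, smul_eq_mul, hc]
  have hfm : AEMeasurable f (c • volume.restrict S) := hf.smul_measure c
  have := jensen_prob (c • volume.restrict S) hprob hfm hp
  simpa only [lintegral_smul_measure, smul_eq_mul] using this

set_option maxHeartbeats 2000000 in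
/-- Dyadic averages of an `L^p` function converge to it in `L^p([0,1],E)`.
Here `z n j` is the weak (Pettis) average of `γ` over the dyadic interval
`[j/2ⁿ, (j+1)/2ⁿ)`, and `γₙ` is the corresponding dyadic simple function. -/
theorem stmt18 {E : Type*} [AddCommGroup E] [Module ℝ E] [UniformSpace E]
    [IsUniformAddGroup E] [ContinuousSMul ℝ E] [LocallyConvexSpace ℝ E] [T2Space E]
    (hcomplete : ∀ u : ℕ → E, CauchySeq u → ∃ x, Tendsto u atTop (𝓝 x))
    (p : ℝ) (hp : 1 ≤ p)
    (γ : ℝ → E) (hγ : LusinMeasurable γ)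
    (hLp : ∀ q : Seminorm ℝ E, Continuous q →
      ∫⁻ t in Icc (0:ℝ) 1, ENNReal.ofReal (q (γ t) ^ p) < ⊤)
    (hint : ∀ f : E →L[ℝ] ℝ, IntegrableOn (fun t => f (γ t)) (Icc (0:ℝ) 1))
    (z : ℕ → ℕ → E)
    (hz : ∀ (n j : ℕ) (f : E →L[ℝ] ℝ),
      f (z n j) = 2 ^ n * ∫ t in Ico ((j : ℝ) / 2 ^ n) ((j + 1 : ℝ) / 2 ^ n), f (γ t))
    (γn : ℕ → ℝ → E)
    (hγn : ∀ n, γn n = fun t => ∑ j ∈ Finset.range (2 ^ n),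
      (Ico ((j : ℝ) / 2 ^ n) ((j + 1 : ℝ) / 2 ^ n)).indicator (fun _ => z n j) t) :
    ∀ q : Seminorm ℝ E, Continuous q →
      Tendsto (fun n => ∫⁻ t in Icc (0:ℝ) 1,
          ENNReal.ofReal (q (γ t - γn n t) ^ p)) atTop (𝓝 0) := by
  intro q hq
  classical
  have hp0 : (0:ℝ) ≤ p := le_trans zero_le_one hp
  have hp0' : p ≠ 0 := by positivity
  set Ic : Set ℝ := Icc 0 1 with hIcdef
  have hIcm : MeasurableSet Ic := measurableSet_Icc
  have hvolIc : volume Ic = 1 := by rw [hIcdef, Real.volume_Icc]; simp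
  set g0 : ℝ → ℝ≥0∞ := fun t => ENNReal.ofReal (q (γ t)) with hg0def
  have hg0m : AEMeasurable g0 (volume.restrict Ic) := (lusin_aemeasurable hγ (fun x => q x) hq).ennreal_ofReal
  have hg0sub : ∀ {S : Set ℝ}, S ⊆ Ic → AEMeasurable g0 (volume.restrict S) := fun hS =>
    hg0m.mono_ac (Measure.absolutelyContinuous_of_le (Measure.restrict_mono hS le_rfl))
  have hgpsub : ∀ {S : Set ℝ}, S ⊆ Ic → AEMeasurable (fun t => g0 t ^ p) (volume.restrict S) :=
    fun hS => (hg0sub hS).pow aemeasurable_const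
  have hFg : ∀ x : E, ENNReal.ofReal (q x ^ p) = ENNReal.ofReal (q x) ^ p := fun x =>
    (ENNReal.ofReal_rpow_of_nonneg (apply_nonneg q x) hp0).symm
  set A := ∫⁻ t in Ic, g0 t ^ p with hAdef
  have hA : A ≠ ⊤ := by
    have h1 := hLp q hq
    have h2 : ∫⁻ t in Ic, ENNReal.ofReal (q (γ t) ^ p) = A := lintegral_congr fun t => hFg _
    rw [h2] at h1
    exact h1.ne
  have hA1 : (∫⁻ t in Ic, g0 t) ≠ ⊤ := by
    have hpt : ∀ t, g0 t ≤ 1 + g0 t ^ p := by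
      intro t
      rcases le_or_gt (g0 t) 1 with h | h
      · exact le_trans h le_self_add
      · have : g0 t = g0 t ^ (1:ℝ) := (ENNReal.rpow_one _).symm
        calc g0 t = g0 t ^ (1:ℝ) := this
          _ ≤ g0 t ^ p := ENNReal.rpow_le_rpow_of_exponent_le h.le hp
          _ ≤ 1 + g0 t ^ p := le_add_self
    have : (∫⁻ t in Ic, g0 t) ≤ ∫⁻ t in Ic, (1 + g0 t ^ p) := lintegral_mono hpt
    rw [lintegral_add_left measurable_const] at this
    refine ne_of_lt (lt_of_le_of_lt this ?_)
    rw [lintegral_one, Measure.restrict_apply_univ, hvolIc]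
    exact ENNReal.add_lt_top.mpr ⟨by simp, lt_top_iff_ne_top.2 hA⟩
  -- convergence criterion
  rw [ENNReal.tendsto_atTop_zero]
  intro ε0 hε0
  set Cp : ℝ≥0∞ := (3:ℝ≥0∞) ^ p * 3 + (2:ℝ≥0∞) ^ p * 3 with hCpdef
  have hCptop : Cp ≠ ⊤ := by
    have h3 : (3:ℝ≥0∞) ^ p ≠ ⊤ := ENNReal.rpow_ne_top_of_nonneg hp0 (by simp)
    have h2 : (2:ℝ≥0∞) ^ p ≠ ⊤ := ENNReal.rpow_ne_top_of_nonneg hp0 (by simp)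
    simp [hCpdef, ENNReal.add_ne_top, ENNReal.mul_ne_top, h3, h2]
  have hCp0 : Cp ≠ 0 := by
    simp only [hCpdef]
    intro h
    rw [add_eq_zero] at h
    have := h.1
    rw [mul_eq_zero] at this
    rcases this with h' | h'
    · exact (ENNReal.rpow_pos (by norm_num) (by simp)).ne' h'
    · norm_num at h'
  obtain ⟨ε, hε, hCpε⟩ : ∃ ε : ℝ, 0 < ε ∧ Cp * ENNReal.ofReal ε ≤ ε0 := by
    set b := min (ε0 / Cp) 1 with hb
    have hb0 : b ≠ 0 := by
      simp only [hb, ne_eq]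
      intro h
      rcases min_eq_iff.mp h with ⟨h', _⟩ | ⟨h', _⟩
      · exact (ENNReal.div_ne_zero.mpr ⟨hε0.ne', hCptop⟩) h'
      · norm_num at h'
    have hbtop : b ≠ ⊤ := ne_top_of_le_ne_top (by simp) (min_le_right _ _)
    refine ⟨b.toReal / 2, by
      have := ENNReal.toReal_pos hb0 hbtop
      positivity, ?_⟩
    have h1 : ENNReal.ofReal (b.toReal / 2) ≤ b := by
      calc ENNReal.ofReal (b.toReal / 2) ≤ ENNReal.ofReal b.toReal :=
            ENNReal.ofReal_le_ofReal (by linarith [ENNReal.toReal_nonneg (a := b)])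
        _ = b := ENNReal.ofReal_toReal hbtop
    calc Cp * ENNReal.ofReal (b.toReal / 2) ≤ Cp * (ε0 / Cp) := by
          exact mul_le_mul_right (le_trans h1 (min_le_left _ _)) Cp
      _ ≤ ε0 := ENNReal.mul_div_le
  set εE := ENNReal.ofReal ε with hεEdef
  have hεE0 : εE ≠ 0 := by simp [hεEdef, hε, hε.not_ge]
  -- absolute continuity
  obtain ⟨δ, hδpos, hδ⟩ := exists_pos_setLIntegral_lt_of_measure_lt
    (μ := volume.restrict Ic) (f := fun t => g0 t ^ p) hA hεE0
  have habs : ∀ S : Set ℝ, S ⊆ Ic → MeasurableSet S → volume S < δ →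
      (∫⁻ t in S, g0 t ^ p) ≤ εE := by
    intro S hsub hSm hSv
    have h1 : (volume.restrict Ic) S < δ := by
      rw [Measure.restrict_apply hSm, inter_eq_left.mpr hsub]
      exact hSv
    have h2 := hδ S h1
    rw [Measure.restrict_restrict hSm, inter_eq_left.mpr hsub] at h2
    exact h2.le
  obtain ⟨δ₀, hδ₀pos, hδ₀lt⟩ : ∃ d : ℝ, 0 < d ∧ ENNReal.ofReal d < δ := by
    rcases eq_or_ne δ ⊤ with h | h
    · exact ⟨1, one_pos, h ▸ ENNReal.ofReal_lt_top⟩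
    · have ht : 0 < δ.toReal := ENNReal.toReal_pos hδpos.ne' h
      refine ⟨δ.toReal / 2, by positivity, ?_⟩
      calc ENNReal.ofReal (δ.toReal / 2) < ENNReal.ofReal δ.toReal := by
            rw [ENNReal.ofReal_lt_ofReal_iff ht]; linarith
        _ = δ := ENNReal.ofReal_toReal h
  -- the parameter η
  set η := min 1 (ε / (A.toReal + 1)) with hηdef
  have hη0 : 0 < η := by
    have : 0 < ε / (A.toReal + 1) := by positivity
    simp [hηdef, this]
  have hη1 : η ≤ 1 := min_le_left _ _
  set ηE := ENNReal.ofReal η with hηEdef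
  have hηE0 : ηE ≠ 0 := by simp [hηEdef, hη0, hη0.not_ge]
  have hηEtop : ηE ≠ ⊤ := ENNReal.ofReal_ne_top
  have hηE1 : ηE ≤ 1 := by
    rw [hηEdef, ← ENNReal.ofReal_one]
    exact ENNReal.ofReal_le_ofReal hη1
  have hηA : ηE * A ≤ εE := by
    rw [hηEdef, hεEdef, ← ENNReal.ofReal_toReal hA, ← ENNReal.ofReal_mul hη0.le]
    refine ENNReal.ofReal_le_ofReal ?_
    have h2 : η ≤ ε / (A.toReal + 1) := min_le_right _ _
    have h3 : (0:ℝ) ≤ A.toReal := ENNReal.toReal_nonneg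
    have h4 := mul_le_mul_of_nonneg_right h2 h3
    have h5 : ε / (A.toReal + 1) * A.toReal ≤ ε := by
      rw [div_mul_eq_mul_div, div_le_iff₀ (by positivity)]
      nlinarith
    linarith
  -- Lusin compact
  obtain ⟨K, hKsub, hKcomp, hKvol, hKcont⟩ := hγ (η * δ₀ / 2) (by positivity)
  have hKm : MeasurableSet K := hKcomp.measurableSet
  have hIKvol : volume (Ic \ K) ≤ ENNReal.ofReal η * ENNReal.ofReal (δ₀ / 2) := by
    rw [← ENNReal.ofReal_mul hη0.le]
    convert hKvol using 2
    ring
  have hIKlt : volume (Ic \ K) < δ := by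
    refine lt_of_le_of_lt (le_trans hIKvol ?_) hδ₀lt
    calc ENNReal.ofReal η * ENNReal.ofReal (δ₀ / 2) ≤ 1 * ENNReal.ofReal (δ₀ / 2) :=
          mul_le_mul_left hηE1 _
      _ = ENNReal.ofReal (δ₀ / 2) := one_mul _
      _ ≤ ENNReal.ofReal δ₀ := ENNReal.ofReal_le_ofReal (by linarith)
  have habsK : (∫⁻ t in Ic \ K, g0 t ^ p) ≤ εE := habs _ diff_subset (hIcm.diff hKm) hIKlt
  -- uniform continuity
  have hε' : (0:ℝ) < ε ^ p⁻¹ := Real.rpow_pos_of_pos hε _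
  obtain ⟨δ₁, hδ₁pos, hδ₁⟩ := unif_cont q hq γ hKcomp hKcont hε'
  have hε'E : ENNReal.ofReal (ε ^ p⁻¹) ^ p = εE := by
    rw [ENNReal.ofReal_rpow_of_nonneg (Real.rpow_nonneg hε.le _) hp0,
      Real.rpow_inv_rpow hε.le hp0']
  -- the starting index
  obtain ⟨N, hN⟩ : ∃ N : ℕ, (1:ℝ) / 2 ^ N < δ₁ := by
    obtain ⟨N, hN⟩ := pow_unbounded_of_one_lt (1 / δ₁) (one_lt_two (α := ℝ))
    refine ⟨N, ?_⟩
    have h2 : (0:ℝ) < 2 ^ N := by positivity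
    rw [div_lt_iff₀ h2]
    rw [div_lt_iff₀ hδ₁pos, mul_comm] at hN
    linarith
  refine ⟨N, fun n hn => ?_⟩
  -- dyadic geometry for fixed n
  have h2n : (0:ℝ) < 2 ^ n := by positivity
  set I : ℕ → Set ℝ := fun j => Ico ((j : ℝ) / 2 ^ n) ((j + 1 : ℝ) / 2 ^ n) with hIdef
  have hIm : ∀ j, MeasurableSet (I j) := fun j => measurableSet_Ico
  have hIapp : ∀ j : ℕ, Ico ((j:ℝ) / 2 ^ n) (((j:ℝ) + 1) / 2 ^ n) = I j := fun j => by
    rw [hIdef]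
  have hvolI : ∀ j, volume (I j) = ENNReal.ofReal (1 / 2 ^ n) := by
    intro j
    rw [hIdef]
    simp only
    rw [Real.volume_Ico]
    congr 1
    ring
  set c : ℝ≥0∞ := ENNReal.ofReal (2 ^ n) with hcdef
  have hctop : c ≠ ⊤ := ENNReal.ofReal_ne_top
  have hcvol : ∀ j, c * volume (I j) = 1 := by
    intro j
    rw [hvolI j, hcdef, ← ENNReal.ofReal_mul (by positivity)]
    rw [mul_one_div, div_self (ne_of_gt h2n), ENNReal.ofReal_one]
  have hIsub : ∀ j, j < 2 ^ n → I j ⊆ Ic := by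
    intro j hj x hx
    rw [hIdef] at hx
    simp only [mem_Ico] at hx
    constructor
    · have h0 : (0:ℝ) ≤ (j:ℝ)/2^n := by positivity
      exact le_trans h0 hx.1
    · have h1 : ((j:ℝ)+1)/2^n ≤ 1 := by
        rw [div_le_one h2n]
        have h2 : ((j:ℝ)+1) ≤ ((2^n : ℕ) : ℝ) := by
          exact_mod_cast Nat.succ_le_of_lt hj
        calc ((j:ℝ)+1) ≤ ((2^n : ℕ) : ℝ) := h2
          _ = 2 ^ n := by push_cast; ring
      exact le_of_lt (lt_of_lt_of_le hx.2 h1)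
  have hdisj : ∀ j j' : ℕ, j ≠ j' → Disjoint (I j) (I j') := by
    have key : ∀ j j' : ℕ, j < j' → Disjoint (I j) (I j') := by
      intro j j' hjj
      rw [hIdef]
      simp only
      rw [Set.Ico_disjoint_Ico]
      refine le_trans (min_le_left _ _) (le_trans ?_ (le_max_right _ _))
      gcongr
      exact_mod_cast Nat.succ_le_of_lt hjj
    intro j j' h
    rcases lt_or_gt_of_ne h with h' | h'
    · exact key _ _ h'
    · exact (key _ _ h').symm
  have hfloor : ∀ t ∈ Ico (0:ℝ) 1, ⌊2 ^ n * t⌋₊ < 2 ^ n ∧ t ∈ I ⌊2 ^ n * t⌋₊ := by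
    intro t ht
    have hnn : (0:ℝ) ≤ 2 ^ n * t := by
      have := ht.1
      positivity
    have h1 : ((⌊2 ^ n * t⌋₊ : ℕ) : ℝ) ≤ 2 ^ n * t := Nat.floor_le hnn
    have h2 : 2 ^ n * t < (⌊2 ^ n * t⌋₊ : ℝ) + 1 := Nat.lt_floor_add_one _
    constructor
    · rw [Nat.floor_lt hnn]
      have h3 : ((2^n : ℕ) : ℝ) = 2 ^ n := by push_cast; ring
      rw [h3]
      nlinarith [ht.2]
    · rw [hIdef]
      simp only [mem_Ico]
      constructor
      · rw [div_le_iff₀ h2n]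
        nlinarith
      · rw [lt_div_iff₀ h2n]
        nlinarith
  have huniq : ∀ j, j < 2 ^ n → ∀ t ∈ I j, γn n t = z n j := by
    intro j hj t htI
    rw [hγn n]
    simp only
    rw [Finset.sum_eq_single_of_mem j (Finset.mem_range.mpr hj)]
    · exact Set.indicator_of_mem (by rw [hIdef] at htI; exact htI) _
    · intro j' hj' hne
      refine Set.indicator_of_notMem ?_ _
      intro ht'
      have ht'' : t ∈ I j' := by rw [hIdef]; exact ht'
      exact Set.disjoint_left.mp (hdisj j' j hne) ht'' htI
  have hcast : ((2^n : ℕ) : ℝ≥0∞) = c := by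
    rw [hcdef, ← ENNReal.ofReal_natCast (2^n)]
    congr 1
    push_cast
    ring
  have hsumvol : ∑ j ∈ Finset.range (2 ^ n), volume (I j) = 1 := by
    rw [Finset.sum_congr rfl (fun j _ => hvolI j), Finset.sum_const, Finset.card_range,
      nsmul_eq_mul, hcast]
    have := hcvol 0
    rwa [hvolI 0] at this
  have hrangesub : (⋃ j ∈ Finset.range (2 ^ n), I j) ⊆ Ic :=
    iUnion₂_subset fun j hj => hIsub j (Finset.mem_range.mp hj)
  have hsumIle : ∑ j ∈ Finset.range (2 ^ n), ∫⁻ t in I j, g0 t ^ p ≤ A := by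
    rw [← lintegral_biUnion_finset (fun j _ j' _ h => hdisj j j' h) (fun j _ => hIm j)]
    exact lintegral_mono_set hrangesub
  -- good and bad dyadic indices
  set good : Finset ℕ := (Finset.range (2 ^ n)).filter
    (fun j => volume (I j \ K) ≤ ηE * volume (I j)) with hgooddef
  set bad : Finset ℕ := (Finset.range (2 ^ n)).filter
    (fun j => ¬ volume (I j \ K) ≤ ηE * volume (I j)) with hbaddef
  set B : Set ℝ := ⋃ j ∈ bad, I j with hBdef
  set G : Set ℝ := ⋃ j ∈ good, K ∩ I j with hGdef
  set R : Set ℝ := B ∪ (Ic \ K) with hRdef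
  have hBm : MeasurableSet B := by
    rw [hBdef]
    exact MeasurableSet.biUnion bad.countable_toSet (fun j _ => hIm j)
  have hBsub : B ⊆ Ic := by
    rw [hBdef]
    exact iUnion₂_subset fun j hj =>
      hIsub j (Finset.mem_range.mp (Finset.mem_filter.mp hj).1)
  have hRm : MeasurableSet R := hBm.union (hIcm.diff hKm)
  have hRsub : R ⊆ Ic := union_subset hBsub diff_subset
  have hGsub : G ⊆ Ic := by
    rw [hGdef]
    exact iUnion₂_subset fun j hj => subset_trans inter_subset_left hKsub
  have hvolB : volume B ≤ ENNReal.ofReal (δ₀ / 2) := by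
    have hBsum : volume B = ∑ j ∈ bad, volume (I j) := by
      rw [hBdef]
      exact measure_biUnion_finset (fun j _ j' _ h => hdisj j j' h) (fun j _ => hIm j)
    have h2 : ∑ j ∈ bad, ηE * volume (I j) ≤ ∑ j ∈ bad, volume (I j \ K) :=
      Finset.sum_le_sum (fun j hj => (not_le.mp (Finset.mem_filter.mp hj).2).le)
    have h3 : ∑ j ∈ bad, volume (I j \ K) = volume (⋃ j ∈ bad, I j \ K) :=
      (measure_biUnion_finset (fun j _ j' _ h => Disjoint.mono diff_subset diff_subset
        (hdisj j j' h)) (fun j _ => (hIm j).diff hKm)).symm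
    have h4 : volume (⋃ j ∈ bad, I j \ K) ≤ volume (Ic \ K) := by
      refine measure_mono (iUnion₂_subset fun j hj => ?_)
      exact diff_subset_diff_left (hIsub j (Finset.mem_range.mp (Finset.mem_filter.mp hj).1))
    have h5 : ηE * volume B ≤ ηE * ENNReal.ofReal (δ₀ / 2) := by
      calc ηE * volume B = ∑ j ∈ bad, ηE * volume (I j) := by rw [hBsum, Finset.mul_sum]
        _ ≤ ∑ j ∈ bad, volume (I j \ K) := h2
        _ = volume (⋃ j ∈ bad, I j \ K) := h3
        _ ≤ volume (Ic \ K) := h4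
        _ ≤ ENNReal.ofReal η * ENNReal.ofReal (δ₀ / 2) := hIKvol
        _ = ηE * ENNReal.ofReal (δ₀ / 2) := by rw [hηEdef]
    exact (ENNReal.mul_le_mul_iff_right hηE0 hηEtop).mp h5
  have hvolBlt : volume B < δ := by
    refine lt_of_le_of_lt (le_trans hvolB ?_) hδ₀lt
    exact ENNReal.ofReal_le_ofReal (by linarith)
  have habsB : (∫⁻ t in B, g0 t ^ p) ≤ εE := habs _ hBsub hBm hvolBlt
  have hvolRlt : volume R < δ := by
    have h1 : volume R ≤ volume B + volume (Ic \ K) := measure_union_le _ _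
    have h2 : volume (Ic \ K) ≤ ENNReal.ofReal (δ₀ / 2) := by
      refine le_trans hIKvol ?_
      calc ENNReal.ofReal η * ENNReal.ofReal (δ₀ / 2) ≤ 1 * ENNReal.ofReal (δ₀ / 2) :=
            mul_le_mul_left hηE1 _
        _ = ENNReal.ofReal (δ₀ / 2) := one_mul _
    calc volume R ≤ ENNReal.ofReal (δ₀ / 2) + ENNReal.ofReal (δ₀ / 2) :=
          le_trans h1 (add_le_add hvolB h2)
      _ = ENNReal.ofReal δ₀ := by rw [← ENNReal.ofReal_add (by linarith) (by linarith)]; congr 1; ring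
      _ < δ := hδ₀lt
  have habsR : (∫⁻ t in R, g0 t ^ p) ≤ εE := habs _ hRsub hRm hvolRlt
  -- Hahn-Banach bound on the averages
  have hzbound : ∀ j, j < 2 ^ n → ENNReal.ofReal (q (z n j)) ≤ c * ∫⁻ s in I j, g0 s := by
    intro j hj
    obtain ⟨f, hfx, hfabs⟩ := hb_seminorm q hq (z n j)
    have hfin : (∫⁻ s in I j, g0 s) ≠ ⊤ :=
      ne_of_lt (lt_of_le_of_lt (lintegral_mono_set (hIsub j hj)) (lt_top_iff_ne_top.mpr hA1))
    have h2 : f (z n j) = 2 ^ n * ∫ s in I j, f (γ s) := by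
      rw [hz n j f, hIdef]
    have h4 : |∫ s in I j, f (γ s)| ≤ (∫⁻ s in I j, ENNReal.ofReal ‖f (γ s)‖).toReal := by
      rw [← Real.norm_eq_abs]
      exact norm_integral_le_lintegral_norm _
    have h5 : (∫⁻ s in I j, ENNReal.ofReal ‖f (γ s)‖) ≤ ∫⁻ s in I j, g0 s := by
      refine lintegral_mono fun s => ENNReal.ofReal_le_ofReal ?_
      rw [Real.norm_eq_abs]
      exact hfabs (γ s)
    have h6 : q (z n j) ≤ 2 ^ n * (∫⁻ s in I j, g0 s).toReal := by
      rw [← hfx, h2]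
      have h7 := le_trans (le_abs_self _) (le_trans h4 (ENNReal.toReal_mono hfin h5))
      exact mul_le_mul_of_nonneg_left h7 (le_of_lt h2n)
    calc ENNReal.ofReal (q (z n j))
        ≤ ENNReal.ofReal (2 ^ n * (∫⁻ s in I j, g0 s).toReal) := ENNReal.ofReal_le_ofReal h6
      _ = c * ∫⁻ s in I j, g0 s := by
          rw [ENNReal.ofReal_mul (le_of_lt h2n), ENNReal.ofReal_toReal hfin, hcdef]
  have hcjbound : ∀ j, j < 2 ^ n →
      (ENNReal.ofReal (q (z n j))) ^ p ≤ c * ∫⁻ s in I j, g0 s ^ p := by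
    intro j hj
    have h2 : (c * ∫⁻ s in I j, g0 s) ^ p ≤ c * ∫⁻ s in I j, g0 s ^ p :=
      jensen_avg (hIm j) (hg0sub (hIsub j hj)) (hcvol j) hp
    exact le_trans (ENNReal.rpow_le_rpow (hzbound j hj) hp0) h2
  have hWbound : ∀ j, j < 2 ^ n →
      (c * ∫⁻ s in I j \ K, g0 s) ^ p ≤ c * ∫⁻ s in I j \ K, g0 s ^ p := by
    intro j hj
    have hdm : MeasurableSet (I j \ K) := (hIm j).diff hKm
    have hind : ∀ (u : ℝ → ℝ≥0∞), (∫⁻ s in I j, (I j \ K).indicator u s) = ∫⁻ s in I j \ K, u s := by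
      intro u
      rw [lintegral_indicator hdm, Measure.restrict_restrict hdm,
        inter_eq_left.mpr diff_subset]
    have hmeas : AEMeasurable ((I j \ K).indicator g0) (volume.restrict (I j)) :=
      (hg0sub (hIsub j hj)).indicator hdm
    have hJ := jensen_avg (hIm j) hmeas (hcvol j) hp
    rw [hind g0] at hJ
    have hpow : ∀ s, ((I j \ K).indicator g0 s) ^ p = (I j \ K).indicator (fun x => g0 x ^ p) s := by
      intro s
      by_cases hs : s ∈ I j \ K
      · rw [Set.indicator_of_mem hs, Set.indicator_of_mem hs]
      · rw [Set.indicator_of_notMem hs, Set.indicator_of_notMem hs,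
          ENNReal.zero_rpow_of_pos (lt_of_lt_of_le zero_lt_one hp)]
    calc (c * ∫⁻ s in I j \ K, g0 s) ^ p
        ≤ c * ∫⁻ s in I j, ((I j \ K).indicator g0 s) ^ p := hJ
      _ = c * ∫⁻ s in I j \ K, g0 s ^ p := by
          rw [lintegral_congr hpow, hind (fun x => g0 x ^ p)]
  -- the key pointwise estimate on good intervals
  have hptwise : ∀ j, j ∈ good → ∀ t ∈ K ∩ I j,
      ENNReal.ofReal (q (γ t - γn n t)) ≤
        ENNReal.ofReal (ε ^ p⁻¹) + (g0 t * ηE + c * ∫⁻ s in I j \ K, g0 s) := by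
    intro j hjgood t ht
    obtain ⟨htK, htI⟩ := ht
    have hj : j < 2 ^ n := Finset.mem_range.mp (Finset.mem_filter.mp hjgood).1
    have hjg : volume (I j \ K) ≤ ηE * volume (I j) := (Finset.mem_filter.mp hjgood).2
    rw [huniq j hj t htI]
    obtain ⟨f, hfx, hfabs⟩ := hb_seminorm q hq (γ t - z n j)
    have hfle : ∀ y, f y ≤ q y := fun y => le_trans (le_abs_self _) (hfabs y)
    set L : ℝ≥0∞ := ∫⁻ s in I j \ K, g0 s with hLdef
    have hLfin : L ≠ ⊤ := by
      rw [hLdef]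
      exact ne_of_lt (lt_of_le_of_lt
        (lintegral_mono_set (subset_trans diff_subset (hIsub j hj)))
        (lt_top_iff_ne_top.mpr hA1))
    have hIntf : IntegrableOn (fun s => f (γ s)) (I j) volume := (hint f).mono_set (hIsub j hj)
    have hvolfin : volume (I j) < ⊤ := by rw [hvolI j]; exact ENNReal.ofReal_lt_top
    have hIntc : IntegrableOn (fun _ : ℝ => f (γ t)) (I j) volume :=
      integrableOn_const hvolfin.ne
    have hInth : IntegrableOn (fun s => f (γ t) - f (γ s)) (I j) volume := hIntc.sub hIntf
    have hvolto : (volume (I j)).toReal = 1 / 2 ^ n := by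
      rw [hvolI j, ENNReal.toReal_ofReal (by positivity)]
    have heq1 : f (γ t - z n j) = 2 ^ n * ∫ s in I j, (f (γ t) - f (γ s)) := by
      rw [map_sub, hz n j f, hIapp j]
      rw [integral_sub hIntc hIntf, setIntegral_const, measureReal_def, hvolto, smul_eq_mul]
      field_simp
    have hsplit : (∫ s in I j, (f (γ t) - f (γ s))) =
        (∫ s in I j ∩ K, (f (γ t) - f (γ s))) + ∫ s in I j \ K, (f (γ t) - f (γ s)) :=
      (integral_inter_add_diff hKm hInth).symm
    have hK1 : (∫ s in I j ∩ K, (f (γ t) - f (γ s))) ≤ 1 / 2 ^ n * ε ^ p⁻¹ := by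
      have hle : ∀ s ∈ I j ∩ K, f (γ t) - f (γ s) ≤ ε ^ p⁻¹ := by
        intro s hs
        rw [← map_sub f]
        refine le_of_lt (lt_of_le_of_lt (hfle _) (hδ₁ t htK s hs.2 ?_))
        have htI' : t ∈ Ico ((j:ℝ)/2^n) (((j:ℝ)+1)/2^n) := by rw [hIdef] at htI; exact htI
        have hsI' : s ∈ Ico ((j:ℝ)/2^n) (((j:ℝ)+1)/2^n) := by
          have := hs.1
          rw [hIdef] at this
          exact this
        have hlen : ((j:ℝ)+1)/2^n - (j:ℝ)/2^n = 1/2^n := by ring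
        have h2 : |t - s| < 1 / 2 ^ n := by
          rw [abs_sub_lt_iff]
          obtain ⟨ha1, ha2⟩ := htI'
          obtain ⟨hb1, hb2⟩ := hsI'
          constructor <;> linarith
        have h3 : (1:ℝ) / 2 ^ n ≤ 1 / 2 ^ N := by
          apply div_le_div_of_nonneg_left one_pos.le (by positivity)
          exact pow_le_pow_right₀ one_le_two hn
        linarith
      calc (∫ s in I j ∩ K, (f (γ t) - f (γ s)))
          ≤ ∫ _ in I j ∩ K, (ε ^ p⁻¹ : ℝ) :=
            setIntegral_mono_on (hInth.mono_set inter_subset_left)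
              (integrableOn_const (
                (lt_of_le_of_lt (measure_mono inter_subset_left) hvolfin).ne))
              ((hIm j).inter hKm) hle
        _ = (volume (I j ∩ K)).toReal * ε ^ p⁻¹ := by rw [setIntegral_const, smul_eq_mul, measureReal_def]
        _ ≤ 1 / 2 ^ n * ε ^ p⁻¹ := by
            refine mul_le_mul_of_nonneg_right ?_ (le_of_lt hε')
            rw [← hvolto]
            exact ENNReal.toReal_mono (ne_of_lt hvolfin) (measure_mono inter_subset_left)
    have hfin2 : g0 t * volume (I j \ K) + L ≠ ⊤ :=
      ENNReal.add_ne_top.mpr ⟨ENNReal.mul_ne_top ENNReal.ofReal_ne_top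
        (ne_of_lt (lt_of_le_of_lt (measure_mono diff_subset) hvolfin)), hLfin⟩
    have hK2 : (∫ s in I j \ K, (f (γ t) - f (γ s))) ≤ (g0 t * volume (I j \ K) + L).toReal := by
      have h2 : |∫ s in I j \ K, (f (γ t) - f (γ s))| ≤
          (∫⁻ s in I j \ K, ENNReal.ofReal ‖f (γ t) - f (γ s)‖).toReal := by
        rw [← Real.norm_eq_abs]
        exact norm_integral_le_lintegral_norm _
      have h3 : (∫⁻ s in I j \ K, ENNReal.ofReal ‖f (γ t) - f (γ s)‖) ≤
          ∫⁻ s in I j \ K, (g0 t + g0 s) := by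
        refine lintegral_mono fun s => ?_
        rw [Real.norm_eq_abs]
        have h4 : |f (γ t) - f (γ s)| ≤ q (γ t) + q (γ s) := by
          rw [← map_sub f]
          refine le_trans (hfabs _) ?_
          have h5 := map_add_le_add q (γ t) (-(γ s))
          rwa [← sub_eq_add_neg, map_neg_eq_map] at h5
        calc ENNReal.ofReal |f (γ t) - f (γ s)| ≤ ENNReal.ofReal (q (γ t) + q (γ s)) :=
              ENNReal.ofReal_le_ofReal h4
          _ = g0 t + g0 s := ENNReal.ofReal_add (apply_nonneg q _) (apply_nonneg q _)
      have h5 : (∫⁻ s in I j \ K, (g0 t + g0 s)) = g0 t * volume (I j \ K) + L := by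
        rw [lintegral_add_left measurable_const, setLIntegral_const]
      refine le_trans (le_abs_self _) (le_trans h2 ?_)
      rw [← h5]
      exact ENNReal.toReal_mono (h5 ▸ hfin2) h3
    have hreal : q (γ t - z n j) ≤ ε ^ p⁻¹ + 2 ^ n * (g0 t * volume (I j \ K) + L).toReal := by
      rw [← hfx, heq1, hsplit]
      have h6 := add_le_add hK1 hK2
      have h7 := mul_le_mul_of_nonneg_left h6 (le_of_lt h2n)
      calc 2 ^ n * ((∫ s in I j ∩ K, (f (γ t) - f (γ s))) + ∫ s in I j \ K, (f (γ t) - f (γ s)))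
          ≤ 2 ^ n * (1 / 2 ^ n * ε ^ p⁻¹ + (g0 t * volume (I j \ K) + L).toReal) := h7
        _ = ε ^ p⁻¹ + 2 ^ n * (g0 t * volume (I j \ K) + L).toReal := by
            field_simp
    calc ENNReal.ofReal (q (γ t - z n j))
        ≤ ENNReal.ofReal (ε ^ p⁻¹ + 2 ^ n * (g0 t * volume (I j \ K) + L).toReal) :=
          ENNReal.ofReal_le_ofReal hreal
      _ ≤ ENNReal.ofReal (ε ^ p⁻¹) +
          ENNReal.ofReal (2 ^ n * (g0 t * volume (I j \ K) + L).toReal) :=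
          ENNReal.ofReal_add_le
      _ = ENNReal.ofReal (ε ^ p⁻¹) + c * (g0 t * volume (I j \ K) + L) := by
          rw [ENNReal.ofReal_mul (le_of_lt h2n), ENNReal.ofReal_toReal hfin2, hcdef]
      _ ≤ ENNReal.ofReal (ε ^ p⁻¹) + (g0 t * ηE + c * L) := by
          refine add_le_add le_rfl ?_
          rw [mul_add]
          refine add_le_add ?_ le_rfl
          calc c * (g0 t * volume (I j \ K)) = g0 t * (c * volume (I j \ K)) := by ring
            _ ≤ g0 t * (c * (ηE * volume (I j))) := by
                exact mul_le_mul_right (mul_le_mul_right hjg c) _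
            _ = g0 t * (ηE * (c * volume (I j))) := by ring
            _ = g0 t * ηE := by rw [hcvol j, mul_one]
  have h3top : (3:ℝ≥0∞) ^ p ≠ ⊤ := ENNReal.rpow_ne_top_of_nonneg hp0 (by simp)
  have h2top : (2:ℝ≥0∞) ^ p ≠ ⊤ := ENNReal.rpow_ne_top_of_nonneg hp0 (by simp)
  -- integral bound over the good set
  have hGoodInt : (∫⁻ t in G, ENNReal.ofReal (q (γ t - γn n t) ^ p)) ≤
      (3:ℝ≥0∞) ^ p * (εE + εE + εE) := by
    have hstep : ∀ j ∈ good, (∫⁻ t in K ∩ I j, ENNReal.ofReal (q (γ t - γn n t) ^ p)) ≤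
        (3:ℝ≥0∞) ^ p * (εE * volume (I j) + ηE * (∫⁻ t in K ∩ I j, g0 t ^ p) +
          (∫⁻ s in I j \ K, g0 s ^ p)) := by
      intro j hjgood
      have hj : j < 2 ^ n := Finset.mem_range.mp (Finset.mem_filter.mp hjgood).1
      set Wp : ℝ≥0∞ := c * ∫⁻ s in I j \ K, g0 s ^ p with hWpdef
      have hKIm : MeasurableSet (K ∩ I j) := hKm.inter (hIm j)
      have hbound : ∀ t ∈ K ∩ I j, ENNReal.ofReal (q (γ t - γn n t) ^ p) ≤
          (3:ℝ≥0∞) ^ p * (εE + ηE * g0 t ^ p + Wp) := by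
        intro t ht
        rw [hFg]
        have h1 := hptwise j hjgood t ht
        rw [← add_assoc] at h1
        have h2 := ENNReal.rpow_le_rpow h1 hp0
        refine le_trans h2 (le_trans (add3_rpow_le hp0) ?_)
        refine mul_le_mul_right ?_ _
        refine add_le_add (add_le_add ?_ ?_) ?_
        · rw [hε'E]
        · calc (g0 t * ηE) ^ p = g0 t ^ p * ηE ^ p := ENNReal.mul_rpow_of_nonneg _ _ hp0
            _ ≤ g0 t ^ p * ηE := by
                refine mul_le_mul_right ?_ _
                calc ηE ^ p ≤ ηE ^ (1:ℝ) := ENNReal.rpow_le_rpow_of_exponent_ge hηE1 hp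
                  _ = ηE := ENNReal.rpow_one _
            _ = ηE * g0 t ^ p := mul_comm _ _
        · exact hWbound j hj
      calc (∫⁻ t in K ∩ I j, ENNReal.ofReal (q (γ t - γn n t) ^ p))
          ≤ ∫⁻ t in K ∩ I j, (3:ℝ≥0∞) ^ p * (εE + ηE * g0 t ^ p + Wp) := by
            refine lintegral_mono_ae ?_
            filter_upwards [ae_restrict_mem hKIm] with t ht
            exact hbound t ht
        _ = (3:ℝ≥0∞) ^ p * ∫⁻ t in K ∩ I j, (εE + ηE * g0 t ^ p + Wp) :=
            lintegral_const_mul' _ _ h3top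
        _ = (3:ℝ≥0∞) ^ p * ((∫⁻ t in K ∩ I j, (εE + ηE * g0 t ^ p)) + Wp * volume (K ∩ I j)) := by
            congr 1
            rw [lintegral_add_right' _ aemeasurable_const, setLIntegral_const]
        _ = (3:ℝ≥0∞) ^ p * (εE * volume (K ∩ I j) +
              ηE * (∫⁻ t in K ∩ I j, g0 t ^ p) + Wp * volume (K ∩ I j)) := by
            congr 2
            rw [lintegral_add_left' aemeasurable_const, setLIntegral_const,
              lintegral_const_mul' ηE _ hηEtop]
        _ ≤ (3:ℝ≥0∞) ^ p * (εE * volume (I j) +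
              ηE * (∫⁻ t in K ∩ I j, g0 t ^ p) + Wp * volume (I j)) := by
            refine mul_le_mul_right ?_ _
            have hvle : volume (K ∩ I j) ≤ volume (I j) := measure_mono inter_subset_right
            exact add_le_add (add_le_add (mul_le_mul_right hvle _) le_rfl)
              (mul_le_mul_right hvle _)
        _ = (3:ℝ≥0∞) ^ p * (εE * volume (I j) + ηE * (∫⁻ t in K ∩ I j, g0 t ^ p) +
              (∫⁻ s in I j \ K, g0 s ^ p)) := by
            congr 2
            rw [hWpdef]
            calc c * (∫⁻ s in I j \ K, g0 s ^ p) * volume (I j)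
                = (c * volume (I j)) * ∫⁻ s in I j \ K, g0 s ^ p := by ring
              _ = ∫⁻ s in I j \ K, g0 s ^ p := by rw [hcvol j, one_mul]
    have hs1 : ∑ j ∈ good, εE * volume (I j) ≤ εE := by
      calc ∑ j ∈ good, εE * volume (I j) ≤ ∑ j ∈ Finset.range (2 ^ n), εE * volume (I j) :=
            Finset.sum_le_sum_of_subset (Finset.filter_subset _ _)
        _ = εE * ∑ j ∈ Finset.range (2 ^ n), volume (I j) := (Finset.mul_sum _ _ _).symm
        _ = εE := by rw [hsumvol, mul_one]
    have hs2 : ∑ j ∈ good, ηE * (∫⁻ t in K ∩ I j, g0 t ^ p) ≤ εE := by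
      have he : ∑ j ∈ good, (∫⁻ t in K ∩ I j, g0 t ^ p) = ∫⁻ t in G, g0 t ^ p := by
        rw [hGdef]
        exact (lintegral_biUnion_finset
          (fun j hj j' hj' h => Disjoint.mono inter_subset_right inter_subset_right
            (hdisj j j' h)) (fun j _ => hKm.inter (hIm j)) _).symm
      calc ∑ j ∈ good, ηE * (∫⁻ t in K ∩ I j, g0 t ^ p)
          = ηE * ∑ j ∈ good, (∫⁻ t in K ∩ I j, g0 t ^ p) := (Finset.mul_sum _ _ _).symm
        _ = ηE * ∫⁻ t in G, g0 t ^ p := by rw [he]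
        _ ≤ ηE * A := mul_le_mul_right (lintegral_mono_set hGsub) _
        _ ≤ εE := hηA
    have hs3 : ∑ j ∈ good, (∫⁻ s in I j \ K, g0 s ^ p) ≤ εE := by
      have he : ∑ j ∈ good, (∫⁻ s in I j \ K, g0 s ^ p) =
          ∫⁻ s in ⋃ j ∈ good, I j \ K, g0 s ^ p :=
        (lintegral_biUnion_finset
          (fun j hj j' hj' h => Disjoint.mono diff_subset diff_subset (hdisj j j' h))
          (fun j _ => (hIm j).diff hKm) _).symm
      rw [he]
      refine le_trans (lintegral_mono_set ?_) habsK
      refine iUnion₂_subset fun j hj => ?_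
      exact diff_subset_diff_left (hIsub j (Finset.mem_range.mp (Finset.mem_filter.mp hj).1))
    calc (∫⁻ t in G, ENNReal.ofReal (q (γ t - γn n t) ^ p))
        ≤ ∑ j ∈ good, ∫⁻ t in K ∩ I j, ENNReal.ofReal (q (γ t - γn n t) ^ p) := by
          rw [hGdef]
          exact lint_biUnion_le _ good _ _
      _ ≤ ∑ j ∈ good, (3:ℝ≥0∞) ^ p * (εE * volume (I j) +
            ηE * (∫⁻ t in K ∩ I j, g0 t ^ p) + (∫⁻ s in I j \ K, g0 s ^ p)) :=
          Finset.sum_le_sum hstep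
      _ = (3:ℝ≥0∞) ^ p * (∑ j ∈ good, εE * volume (I j) +
            ∑ j ∈ good, ηE * (∫⁻ t in K ∩ I j, g0 t ^ p) +
            ∑ j ∈ good, (∫⁻ s in I j \ K, g0 s ^ p)) := by
          rw [← Finset.mul_sum, Finset.sum_add_distrib, Finset.sum_add_distrib]
      _ ≤ (3:ℝ≥0∞) ^ p * (εE + εE + εE) :=
          mul_le_mul_right (add_le_add (add_le_add hs1 hs2) hs3) _
  -- integral bound over the bad region R
  have hone0 : volume.restrict ({1} : Set ℝ) = 0 :=
    Measure.restrict_eq_zero.mpr (by simp)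
  have hRInt : (∫⁻ t in R, ENNReal.ofReal (q (γ t - γn n t) ^ p)) ≤
      (2:ℝ≥0∞) ^ p * (εE + (εE + εE)) := by
    have hqnR : (∫⁻ t in R, ENNReal.ofReal (q (γn n t)) ^ p) ≤ εE + εE := by
      have hRcov : R ⊆ (⋃ j ∈ Finset.range (2 ^ n), (R ∩ I j)) ∪ {1} := by
        intro t htR
        have htIc : t ∈ Ic := hRsub htR
        by_cases ht1 : t = 1
        · exact Or.inr (by simp [ht1])
        · have htIco : t ∈ Ico (0:ℝ) 1 := ⟨htIc.1, lt_of_le_of_ne htIc.2 ht1⟩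
          obtain ⟨hj, htI⟩ := hfloor t htIco
          exact Or.inl (mem_iUnion₂.mpr ⟨_, Finset.mem_range.mpr hj, htR, htI⟩)
      have hjeq : ∀ j, j < 2 ^ n → (∫⁻ t in R ∩ I j, ENNReal.ofReal (q (γn n t)) ^ p) =
          ENNReal.ofReal (q (z n j)) ^ p * volume (R ∩ I j) := by
        intro j hj
        rw [setLIntegral_congr_fun (hRm.inter (hIm j))
          (fun t ht => by rw [huniq j hj t ht.2])]
        exact setLIntegral_const _ _
      have hbadle : ∀ j ∈ bad, ENNReal.ofReal (q (z n j)) ^ p * volume (R ∩ I j) ≤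
          ∫⁻ s in I j, g0 s ^ p := by
        intro j hj
        have hjr : j < 2 ^ n := Finset.mem_range.mp (Finset.mem_filter.mp hj).1
        calc ENNReal.ofReal (q (z n j)) ^ p * volume (R ∩ I j)
            ≤ (c * ∫⁻ s in I j, g0 s ^ p) * volume (I j) :=
              mul_le_mul' (hcjbound j hjr) (measure_mono inter_subset_right)
          _ = (c * volume (I j)) * ∫⁻ s in I j, g0 s ^ p := by ring
          _ = ∫⁻ s in I j, g0 s ^ p := by rw [hcvol j, one_mul]
      have hgoodle : ∀ j ∈ good, ENNReal.ofReal (q (z n j)) ^ p * volume (R ∩ I j) ≤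
          ηE * ∫⁻ s in I j, g0 s ^ p := by
        intro j hj
        have hjr : j < 2 ^ n := Finset.mem_range.mp (Finset.mem_filter.mp hj).1
        have hjg : volume (I j \ K) ≤ ηE * volume (I j) := (Finset.mem_filter.mp hj).2
        have hsubRI : R ∩ I j ⊆ I j \ K := by
          rintro t ⟨htR, htI⟩
          rcases htR with htB | htIK
          · exfalso
            rw [hBdef] at htB
            obtain ⟨j', hj', htI'⟩ := mem_iUnion₂.mp htB
            have hne : j' ≠ j := by
              intro he
              have := (Finset.mem_filter.mp hj').2
              rw [he] at this
              exact this (Finset.mem_filter.mp hj).2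
            exact Set.disjoint_left.mp (hdisj j' j hne) htI' htI
          · exact ⟨htI, htIK.2⟩
        calc ENNReal.ofReal (q (z n j)) ^ p * volume (R ∩ I j)
            ≤ (c * ∫⁻ s in I j, g0 s ^ p) * (ηE * volume (I j)) :=
              mul_le_mul' (hcjbound j hjr) (le_trans (measure_mono hsubRI) hjg)
          _ = ηE * ((c * volume (I j)) * ∫⁻ s in I j, g0 s ^ p) := by ring
          _ = ηE * ∫⁻ s in I j, g0 s ^ p := by rw [hcvol j, one_mul]
      have hsum : ∑ j ∈ Finset.range (2 ^ n), ENNReal.ofReal (q (z n j)) ^ p * volume (R ∩ I j)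
          ≤ εE + εE := by
        rw [← Finset.sum_filter_add_sum_filter_not (Finset.range (2 ^ n))
          (fun j => volume (I j \ K) ≤ ηE * volume (I j))]
        have hbadsum : ∑ j ∈ bad, ENNReal.ofReal (q (z n j)) ^ p * volume (R ∩ I j) ≤ εE := by
          calc ∑ j ∈ bad, ENNReal.ofReal (q (z n j)) ^ p * volume (R ∩ I j)
              ≤ ∑ j ∈ bad, ∫⁻ s in I j, g0 s ^ p := Finset.sum_le_sum hbadle
            _ = ∫⁻ s in B, g0 s ^ p := by
                rw [hBdef]
                exact (lintegral_biUnion_finset (fun j _ j' _ h => hdisj j j' h)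
                  (fun j _ => hIm j) _).symm
            _ ≤ εE := habsB
        have hgoodsum : ∑ j ∈ good, ENNReal.ofReal (q (z n j)) ^ p * volume (R ∩ I j) ≤ εE := by
          calc ∑ j ∈ good, ENNReal.ofReal (q (z n j)) ^ p * volume (R ∩ I j)
              ≤ ∑ j ∈ good, ηE * ∫⁻ s in I j, g0 s ^ p := Finset.sum_le_sum hgoodle
            _ ≤ ∑ j ∈ Finset.range (2 ^ n), ηE * ∫⁻ s in I j, g0 s ^ p :=
                Finset.sum_le_sum_of_subset (Finset.filter_subset _ _)
            _ = ηE * ∑ j ∈ Finset.range (2 ^ n), ∫⁻ s in I j, g0 s ^ p :=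
                (Finset.mul_sum _ _ _).symm
            _ ≤ ηE * A := mul_le_mul_right hsumIle _
            _ ≤ εE := hηA
        exact add_le_add hgoodsum hbadsum
      calc (∫⁻ t in R, ENNReal.ofReal (q (γn n t)) ^ p)
          ≤ ∫⁻ t in (⋃ j ∈ Finset.range (2 ^ n), (R ∩ I j)) ∪ {1},
              ENNReal.ofReal (q (γn n t)) ^ p := lintegral_mono_set hRcov
        _ ≤ (∑ j ∈ Finset.range (2 ^ n), ∫⁻ t in R ∩ I j, ENNReal.ofReal (q (γn n t)) ^ p) +
              ∫⁻ t in ({1} : Set ℝ), ENNReal.ofReal (q (γn n t)) ^ p :=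
            le_trans (lintegral_union_le _ _ _)
              (add_le_add_left (lint_biUnion_le _ _ _ _) _)
        _ = ∑ j ∈ Finset.range (2 ^ n), ENNReal.ofReal (q (z n j)) ^ p * volume (R ∩ I j) := by
            rw [hone0, lintegral_zero_measure, add_zero]
            exact Finset.sum_congr rfl fun j hj => hjeq j (Finset.mem_range.mp hj)
        _ ≤ εE + εE := hsum
    have hFle : ∀ t, ENNReal.ofReal (q (γ t - γn n t) ^ p) ≤
        (2:ℝ≥0∞) ^ p * (g0 t ^ p + ENNReal.ofReal (q (γn n t)) ^ p) := by
      intro t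
      rw [hFg]
      have h1 : q (γ t - γn n t) ≤ q (γ t) + q (γn n t) := by
        have h5 := map_add_le_add q (γ t) (-(γn n t))
        rwa [← sub_eq_add_neg, map_neg_eq_map] at h5
      have h2 : ENNReal.ofReal (q (γ t - γn n t)) ≤ g0 t + ENNReal.ofReal (q (γn n t)) := by
        refine le_trans (ENNReal.ofReal_le_ofReal h1) ?_
        rw [ENNReal.ofReal_add (apply_nonneg q _) (apply_nonneg q _)]
      exact le_trans (ENNReal.rpow_le_rpow h2 hp0) (add2_rpow_le hp0)
    calc (∫⁻ t in R, ENNReal.ofReal (q (γ t - γn n t) ^ p))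
        ≤ ∫⁻ t in R, (2:ℝ≥0∞) ^ p * (g0 t ^ p + ENNReal.ofReal (q (γn n t)) ^ p) :=
          lintegral_mono hFle
      _ = (2:ℝ≥0∞) ^ p * ∫⁻ t in R, (g0 t ^ p + ENNReal.ofReal (q (γn n t)) ^ p) :=
          lintegral_const_mul' _ _ h2top
      _ = (2:ℝ≥0∞) ^ p * ((∫⁻ t in R, g0 t ^ p) + ∫⁻ t in R, ENNReal.ofReal (q (γn n t)) ^ p) := by
          rw [lintegral_add_left' (hgpsub hRsub) _]
      _ ≤ (2:ℝ≥0∞) ^ p * (εE + (εE + εE)) :=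
          mul_le_mul_right (add_le_add habsR hqnR) _
  -- assemble everything
  have hcover : Ic ⊆ G ∪ (R ∪ {1}) := by
    intro t htIc
    by_cases ht1 : t = 1
    · exact Or.inr (Or.inr (by simp [ht1]))
    have htIco : t ∈ Ico (0:ℝ) 1 := ⟨htIc.1, lt_of_le_of_ne htIc.2 ht1⟩
    obtain ⟨hj, htI⟩ := hfloor t htIco
    by_cases htK : t ∈ K
    · by_cases hjg : volume (I ⌊2 ^ n * t⌋₊ \ K) ≤ ηE * volume (I ⌊2 ^ n * t⌋₊)
      · refine Or.inl ?_
        rw [hGdef]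
        exact mem_iUnion₂.mpr ⟨_, Finset.mem_filter.mpr ⟨Finset.mem_range.mpr hj, hjg⟩,
          htK, htI⟩
      · refine Or.inr (Or.inl ?_)
        rw [hRdef]
        refine Or.inl ?_
        rw [hBdef]
        exact mem_iUnion₂.mpr ⟨_, Finset.mem_filter.mpr ⟨Finset.mem_range.mpr hj, hjg⟩, htI⟩
    · exact Or.inr (Or.inl (Or.inr ⟨htIc, htK⟩))
  calc (∫⁻ t in Ic, ENNReal.ofReal (q (γ t - γn n t) ^ p))
      ≤ ∫⁻ t in G ∪ (R ∪ {1}), ENNReal.ofReal (q (γ t - γn n t) ^ p) :=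
        lintegral_mono_set hcover
    _ ≤ (∫⁻ t in G, ENNReal.ofReal (q (γ t - γn n t) ^ p)) +
          ((∫⁻ t in R, ENNReal.ofReal (q (γ t - γn n t) ^ p)) +
            ∫⁻ t in ({1} : Set ℝ), ENNReal.ofReal (q (γ t - γn n t) ^ p)) :=
        le_trans (lintegral_union_le _ _ _) (add_le_add_right (lintegral_union_le _ _ _) _)
    _ ≤ (3:ℝ≥0∞) ^ p * (εE + εE + εE) + ((2:ℝ≥0∞) ^ p * (εE + (εE + εE)) + 0) := by
        refine add_le_add hGoodInt (add_le_add hRInt ?_)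
        rw [hone0, lintegral_zero_measure]
    _ = Cp * εE := by
        rw [hCpdef]
        ring
    _ ≤ ε0 := hCpε
end
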